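/- Under the factor model and the quadratic regression model, if either condition (C1) Δ = 3 or condition (C2) diag(Γ₀ᵀΩΓ₀) = 0 holds, then the intercept satisfies α = E(Y) − tr(Σ⁻¹ Λ_y)/2; equivalently, E(Y) = α + tr(ΩΣ). (This is the intercept part of Proposition 1.) -/

import Mathlib

open Matrix MeasureTheory ProbabilityTheory

section Aux

lemma abs_mul4_le (a b c d : ℝ) : |a*b*c*d| ≤ (a^4+b^4+c^4+d^4)/4 := by
  rcases abs_cases (a*b*c*d) with ⟨h, _⟩ | ⟨h, _⟩ <;> rw [h] <;>
    nlinarith [sq_nonneg (a*b - c*d), sq_nonneg (a*b + c*d), sq_nonneg (a^2-b^2),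
      sq_nonneg (c^2-d^2), sq_nonneg (a*b), sq_nonneg (c*d)]

lemma quadform_expand {p q : ℕ} (A : Matrix (Fin p) (Fin q) ℝ) (B : Matrix (Fin p) (Fin p) ℝ)
    (v : Fin q → ℝ) :
    A.mulVec v ⬝ᵥ B.mulVec (A.mulVec v) = ∑ i, ∑ j, (Aᵀ * B * A) i j * (v i * v j) := by
  have h1 : (Aᵀ * B * A).mulVec v = Aᵀ.mulVec (B.mulVec (A.mulVec v)) := by
    rw [← Matrix.mulVec_mulVec, ← Matrix.mulVec_mulVec]
  have h2 : v ⬝ᵥ (Aᵀ * B * A).mulVec v = A.mulVec v ⬝ᵥ B.mulVec (A.mulVec v) := by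
    rw [h1, Matrix.dotProduct_mulVec, Matrix.vecMul_transpose]
  rw [← h2]
  simp only [dotProduct, Matrix.mulVec, Finset.mul_sum]
  exact Finset.sum_congr rfl fun i _ => Finset.sum_congr rfl fun j _ => by ring

lemma lin_expand {p q : ℕ} (A : Matrix (Fin p) (Fin q) ℝ) (b : Fin p → ℝ) (v : Fin q → ℝ) :
    A.mulVec v ⬝ᵥ b = ∑ i, Aᵀ.mulVec b i * v i := by
  rw [dotProduct_comm, Matrix.dotProduct_mulVec, ← Matrix.mulVec_transpose]
  simp [dotProduct, mul_comm]

lemma contract1 {q : ℕ} (M P : Matrix (Fin q) (Fin q) ℝ) :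
    ∑ a, ∑ b, ∑ i, ∑ j, P a b * M i j *
      ((if a = b then (1:ℝ) else 0) * (if i = j then 1 else 0)) = P.trace * M.trace := by
  simp [mul_ite, ite_mul, Finset.sum_ite_eq, Finset.sum_ite_eq', trace, diag,
    Finset.sum_mul, Finset.mul_sum]
  exact Finset.sum_comm

lemma contract2 {q : ℕ} (M P : Matrix (Fin q) (Fin q) ℝ) :
    ∑ a, ∑ b, ∑ i, ∑ j, P a b * M i j *
      ((if a = i then (1:ℝ) else 0) * (if b = j then 1 else 0)) = (M * Pᵀ).trace := by
  simp [mul_ite, ite_mul, Finset.sum_ite_eq, Finset.sum_ite_eq', trace, diag,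
    Matrix.mul_apply, mul_comm]

lemma contract3 {q : ℕ} (M P : Matrix (Fin q) (Fin q) ℝ) :
    ∑ a, ∑ b, ∑ i, ∑ j, P a b * M i j *
      ((if a = j then (1:ℝ) else 0) * (if b = i then 1 else 0)) = (M * P).trace := by
  simp only [mul_ite, ite_mul, mul_one, mul_zero, zero_mul, Finset.sum_ite_eq,
    Finset.sum_ite_eq', Finset.mem_univ, if_true]
  rw [Finset.sum_comm]
  simp [trace, diag, Matrix.mul_apply, mul_comm]

lemma contract4 {q : ℕ} (M P : Matrix (Fin q) (Fin q) ℝ) (D : ℝ) :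
    ∑ a, ∑ b, ∑ i, ∑ j, P a b * M i j *
      (if a = b ∧ b = i ∧ i = j then D - 3 else 0) = (D - 3) * ∑ a, P a a * M a a := by
  simp only [ite_and, mul_ite, mul_zero, Finset.sum_ite_eq, Finset.sum_ite_eq',
    Finset.mem_univ, if_true, Finset.mul_sum]
  refine Finset.sum_congr rfl fun a _ => ?_
  simp [Finset.sum_ite_eq]
  ring

end Aux

section Moments

set_option linter.unusedSectionVars false

variable {q : ℕ} {Ω : Type*} [MeasurableSpace Ω] {μ : Measure Ω} [IsProbabilityMeasure μ]
  {z : Ω → Fin q → ℝ} {Δ : ℝ}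

lemma zsplit2 (hz_meas : ∀ k, Measurable fun ω => z ω k)
    (hz_indep : iIndepFun (fun k ω => z ω k) μ)
    (n m : ℕ) {i j : Fin q} (hij : i ≠ j) :
    ∫ ω, (z ω i)^n * (z ω j)^m ∂μ = (∫ ω, (z ω i)^n ∂μ) * ∫ ω, (z ω j)^m ∂μ :=
  ((hz_indep.indepFun hij).comp (measurable_id.pow_const n)
    (measurable_id.pow_const m)).integral_fun_mul_eq_mul_integral
    ((hz_meas i).pow_const n).aestronglyMeasurable
    ((hz_meas j).pow_const m).aestronglyMeasurable

lemma zsplit3 (hz_meas : ∀ k, Measurable fun ω => z ω k)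
    (hz_indep : iIndepFun (fun k ω => z ω k) μ)
    (n m l : ℕ) {i j k : Fin q} (hij : i ≠ j) (hik : i ≠ k) (hjk : j ≠ k) :
    ∫ ω, (z ω i)^n * (z ω j)^m * (z ω k)^l ∂μ
      = (∫ ω, (z ω i)^n ∂μ) * (∫ ω, (z ω j)^m ∂μ) * ∫ ω, (z ω k)^l ∂μ := by
  have h1 : IndepFun (fun ω => (z ω i)^n * (z ω j)^m) (fun ω => (z ω k)^l) μ :=
    (hz_indep.indepFun_prodMk hz_meas i j k hik hjk).comp
      ((measurable_fst.pow_const n).mul (measurable_snd.pow_const m))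
      (measurable_id.pow_const l)
  rw [h1.integral_fun_mul_eq_mul_integral (((hz_meas i).pow_const n).mul
      ((hz_meas j).pow_const m)).aestronglyMeasurable
      ((hz_meas k).pow_const l).aestronglyMeasurable,
    zsplit2 hz_meas hz_indep n m hij]

lemma zsplit22 (hz_meas : ∀ k, Measurable fun ω => z ω k)
    (hz_indep : iIndepFun (fun k ω => z ω k) μ)
    {a b i j : Fin q} (hai : a ≠ i) (haj : a ≠ j) (hbi : b ≠ i) (hbj : b ≠ j) :
    ∫ ω, (z ω a * z ω b) * (z ω i * z ω j) ∂μ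
      = (∫ ω, z ω a * z ω b ∂μ) * ∫ ω, z ω i * z ω j ∂μ := by
  have h1 : IndepFun (fun ω => z ω a * z ω b) (fun ω => z ω i * z ω j) μ :=
    (hz_indep.indepFun_prodMk_prodMk hz_meas a b i j hai haj hbi hbj).comp
      (measurable_fst.mul measurable_snd) (measurable_fst.mul measurable_snd)
  exact h1.integral_fun_mul_eq_mul_integral ((hz_meas a).mul (hz_meas b)).aestronglyMeasurable
    ((hz_meas i).mul (hz_meas j)).aestronglyMeasurable

lemma zmom2 (hz_meas : ∀ k, Measurable fun ω => z ω k)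
    (hz_indep : iIndepFun (fun k ω => z ω k) μ)
    (hm1 : ∀ k, ∫ ω, z ω k ∂μ = 0) (hm2 : ∀ k, ∫ ω, (z ω k) ^ 2 ∂μ = 1) (i j : Fin q) :
    ∫ ω, z ω i * z ω j ∂μ = if i = j then 1 else 0 := by
  by_cases h : i = j
  · subst h
    rw [show (fun ω => z ω i * z ω i) = fun ω => (z ω i)^2 from funext fun ω => by ring,
      hm2, if_pos rfl]
  · rw [if_neg h, (hz_indep.indepFun h).integral_fun_mul_eq_mul_integral (hz_meas i).aestronglyMeasurable
      (hz_meas j).aestronglyMeasurable, hm1, zero_mul]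

lemma zmom3 (hz_meas : ∀ k, Measurable fun ω => z ω k)
    (hz_indep : iIndepFun (fun k ω => z ω k) μ)
    (hm1 : ∀ k, ∫ ω, z ω k ∂μ = 0) (hm3 : ∀ k, ∫ ω, (z ω k) ^ 3 ∂μ = 0) (i j k : Fin q) :
    ∫ ω, z ω i * z ω j * z ω k ∂μ = 0 := by
  have hp1 : ∀ k, ∫ ω, (z ω k)^1 ∂μ = 0 := fun k => by simpa using hm1 k
  by_cases hij : i = j
  · subst hij
    by_cases hik : i = k
    · subst hik
      rw [show (fun ω => z ω i * z ω i * z ω i) = fun ω => (z ω i)^3 from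
        funext fun ω => by ring, hm3]
    · rw [show (fun ω => z ω i * z ω i * z ω k) = fun ω => (z ω i)^2 * (z ω k)^1 from
        funext fun ω => by ring, zsplit2 hz_meas hz_indep 2 1 hik, hp1, mul_zero]
  · by_cases hik : i = k
    · subst hik
      rw [show (fun ω => z ω i * z ω j * z ω i) = fun ω => (z ω i)^2 * (z ω j)^1 from
        funext fun ω => by ring, zsplit2 hz_meas hz_indep 2 1 hij, hp1, mul_zero]
    · by_cases hjk : j = k
      · subst hjk
        rw [show (fun ω => z ω i * z ω j * z ω j) = fun ω => (z ω i)^1 * (z ω j)^2 from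
          funext fun ω => by ring, zsplit2 hz_meas hz_indep 1 2 hij, hp1, zero_mul]
      · rw [show (fun ω => z ω i * z ω j * z ω k)
            = fun ω => (z ω i)^1 * (z ω j)^1 * (z ω k)^1 from funext fun ω => by ring,
          zsplit3 hz_meas hz_indep 1 1 1 hij hik hjk, hp1, zero_mul, zero_mul]

lemma zmom4 (hz_meas : ∀ k, Measurable fun ω => z ω k)
    (hz_indep : iIndepFun (fun k ω => z ω k) μ)
    (hm1 : ∀ k, ∫ ω, z ω k ∂μ = 0) (hm2 : ∀ k, ∫ ω, (z ω k) ^ 2 ∂μ = 1)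
    (hm3 : ∀ k, ∫ ω, (z ω k) ^ 3 ∂μ = 0) (hm4 : ∀ k, ∫ ω, (z ω k) ^ 4 ∂μ = Δ)
    (a b i j : Fin q) :
    ∫ ω, z ω a * z ω b * z ω i * z ω j ∂μ =
      (if a = b then (1:ℝ) else 0) * (if i = j then 1 else 0)
      + (if a = i then (1:ℝ) else 0) * (if b = j then 1 else 0)
      + (if a = j then (1:ℝ) else 0) * (if b = i then 1 else 0)
      + (if a = b ∧ b = i ∧ i = j then Δ - 3 else 0) := by
  have hp1 : ∀ k, ∫ ω, (z ω k)^1 ∂μ = 0 := fun k => by simpa using hm1 k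
  by_cases hab : a = b
  · subst hab
    by_cases hij : i = j
    · subst hij
      by_cases hai : a = i
      · subst hai
        rw [show (fun ω => z ω a * z ω a * z ω a * z ω a) = fun ω => (z ω a)^4 from
          funext fun ω => by ring, hm4]
        simp; ring
      · rw [show (fun ω => z ω a * z ω a * z ω i * z ω i)
            = fun ω => (z ω a)^2 * (z ω i)^2 from funext fun ω => by ring,
          zsplit2 hz_meas hz_indep 2 2 hai, hm2, hm2]
        simp [hai]
    · by_cases hai : a = i
      · subst hai
        have haj : a ≠ j := hij
        rw [show (fun ω => z ω a * z ω a * z ω a * z ω j)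
            = fun ω => (z ω a)^3 * (z ω j)^1 from funext fun ω => by ring,
          zsplit2 hz_meas hz_indep 3 1 haj, hm3, hp1]
        simp [hij, haj]
      · by_cases haj : a = j
        · subst haj
          have hai' : a ≠ i := fun h => hij (h ▸ rfl)
          rw [show (fun ω => z ω a * z ω a * z ω i * z ω a)
              = fun ω => (z ω a)^3 * (z ω i)^1 from funext fun ω => by ring,
            zsplit2 hz_meas hz_indep 3 1 hai', hm3, hp1]
          simp [hij, hai']
        · rw [show (fun ω => z ω a * z ω a * z ω i * z ω j)
              = fun ω => (z ω a)^2 * (z ω i)^1 * (z ω j)^1 from funext fun ω => by ring,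
            zsplit3 hz_meas hz_indep 2 1 1 hai haj hij, hp1, hp1]
          simp [hij, hai, haj]
  · by_cases hai : a = i
    · subst hai
      by_cases hbj : b = j
      · subst hbj
        rw [show (fun ω => z ω a * z ω b * z ω a * z ω b)
            = fun ω => (z ω a)^2 * (z ω b)^2 from funext fun ω => by ring,
          zsplit2 hz_meas hz_indep 2 2 hab, hm2, hm2]
        simp [hab, Ne.symm hab]
      · by_cases haj : a = j
        · subst haj
          rw [show (fun ω => z ω a * z ω b * z ω a * z ω a)
              = fun ω => (z ω a)^3 * (z ω b)^1 from funext fun ω => by ring,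
            zsplit2 hz_meas hz_indep 3 1 hab, hm3, hp1]
          simp [hab, hbj, Ne.symm hab]
        · have hbj' : b ≠ j := hbj
          rw [show (fun ω => z ω a * z ω b * z ω a * z ω j)
              = fun ω => (z ω a)^2 * (z ω b)^1 * (z ω j)^1 from funext fun ω => by ring,
            zsplit3 hz_meas hz_indep 2 1 1 hab haj hbj', hp1, hp1]
          simp [hab, hbj, haj]
    · by_cases hbi : b = i
      · subst hbi
        by_cases haj : a = j
        · subst haj
          rw [show (fun ω => z ω a * z ω b * z ω b * z ω a)
              = fun ω => (z ω a)^2 * (z ω b)^2 from funext fun ω => by ring,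
            zsplit2 hz_meas hz_indep 2 2 hab, hm2, hm2]
          simp [hab, hai]
        · by_cases hbj : b = j
          · subst hbj
            rw [show (fun ω => z ω a * z ω b * z ω b * z ω b)
                = fun ω => (z ω a)^1 * (z ω b)^3 from funext fun ω => by ring,
              zsplit2 hz_meas hz_indep 1 3 hab, hp1]
            simp [hab, hai, haj]
          · have hba : b ≠ a := Ne.symm hab
            rw [show (fun ω => z ω a * z ω b * z ω b * z ω j)
                = fun ω => (z ω b)^2 * (z ω a)^1 * (z ω j)^1 from funext fun ω => by ring,
              zsplit3 hz_meas hz_indep 2 1 1 hba hbj haj, hp1, hp1]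
            simp [hab, hai, haj, hbj]
      · by_cases haj : a = j
        · subst haj
          rw [show (fun ω => z ω a * z ω b * z ω i * z ω a)
              = fun ω => (z ω a)^2 * (z ω b)^1 * (z ω i)^1 from funext fun ω => by ring,
            zsplit3 hz_meas hz_indep 2 1 1 hab hai hbi, hp1, hp1]
          simp [hab, hai, hbi]
        · by_cases hbj : b = j
          · subst hbj
            have hba : b ≠ a := Ne.symm hab
            rw [show (fun ω => z ω a * z ω b * z ω i * z ω b)
                = fun ω => (z ω b)^2 * (z ω a)^1 * (z ω i)^1 from funext fun ω => by ring,
              zsplit3 hz_meas hz_indep 2 1 1 hba hbi hai, hp1, hp1]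
            simp [hab, hai, hbi, haj]
          · rw [show (fun ω => z ω a * z ω b * z ω i * z ω j)
                = fun ω => (z ω a * z ω b) * (z ω i * z ω j) from funext fun ω => by ring,
              zsplit22 hz_meas hz_indep hai haj hbi hbj,
              zmom2 hz_meas hz_indep hm1 hm2 a b, if_neg hab, zero_mul]
            simp [hab, hai, haj, hbi, hbj]

end Moments
lemma triple_expand {p q : ℕ} (A : Matrix (Fin p) (Fin q) ℝ) (v : Fin q → ℝ) (g : ℝ) (k l : Fin p) :
    g * (A.mulVec v k) * (A.mulVec v l) = ∑ i, ∑ j, (A k i * A l j) * (g * (v i * v j)) := by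
  simp only [Matrix.mulVec, dotProduct, Finset.mul_sum, Finset.sum_mul]
  rw [Finset.sum_comm]
  refine Finset.sum_congr rfl fun i _ => ?_
  refine Finset.sum_congr rfl fun j _ => by ring

lemma collect_quad {p : ℕ} (S : Matrix (Fin p) (Fin p) ℝ) (w : Fin p → ℝ) (g : ℝ) :
    ∑ k, ∑ l, S k l * (g * w l * w k) = g * (w ⬝ᵥ S.mulVec w) := by
  simp only [dotProduct, Matrix.mulVec, Finset.mul_sum]
  refine Finset.sum_congr rfl fun k _ => ?_
  refine Finset.sum_congr rfl fun l _ => by ring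

/-- (Intercept part of Proposition 1.)  Under the factor model `x = Γ₀z + u` and the quadratic
regression model `E(Y|x) = α + (x−u)ᵀβ + (x−u)ᵀΩ(x−u)` a.s., if either (C1) `Δ = 3` or
(C2) `diag(Γ₀ᵀΩΓ₀) = 0`, then the intercept satisfies `α = E Y − tr(Σ⁻¹Λ_y)/2`; equivalently
`E Y = α + tr(ΩΣ)`, where `Λ_y := E[(Y − E Y)(x − u)(x − u)ᵀ]`. -/
theorem intercept_explicit_form {p q : ℕ} {Ω : Type*} [MeasurableSpace Ω]
    (μ : Measure Ω) [IsProbabilityMeasure μ]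
    (z : Ω → Fin q → ℝ) (Γ₀ : Matrix (Fin p) (Fin q) ℝ) (u : Fin p → ℝ)
    (Sig Om : Matrix (Fin p) (Fin p) ℝ) (Y : Ω → ℝ) (αc : ℝ) (βv : Fin p → ℝ) (Δ : ℝ)
    -- the factor z has i.i.d. coordinates with the stated moments
    (hz_meas : ∀ k, Measurable fun ω => z ω k)
    (hz_indep : iIndepFun (fun k ω => z ω k) μ)
    (hz_ident : ∀ k l, IdentDistrib (fun ω => z ω k) (fun ω => z ω l) μ μ)
    (hm1 : ∀ k, ∫ ω, z ω k ∂μ = 0)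
    (hm2 : ∀ k, ∫ ω, (z ω k) ^ 2 ∂μ = 1)
    (hm3 : ∀ k, ∫ ω, (z ω k) ^ 3 ∂μ = 0)
    (hm4 : ∀ k, ∫ ω, (z ω k) ^ 4 ∂μ = Δ)
    (hint4 : ∀ k, Integrable (fun ω => (z ω k) ^ 4) μ)
    -- Γ₀Γ₀ᵀ = Σ with Σ positive definite
    (hSig : Γ₀ * Γ₀ᵀ = Sig) (hSigPD : Sig.PosDef)
    -- Y is a square-integrable response
    (hY_meas : Measurable Y) (hY2 : MemLp Y 2 μ)
    -- Ω is symmetric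
    (hOm : Om.IsSymm)
    -- the quadratic regression model, with x := Γ₀ z + u (so that x − u = Γ₀ z)
    (hmodel : μ[Y | MeasurableSpace.comap (fun ω => Γ₀.mulVec (z ω) + u) inferInstance]
        =ᵐ[μ] fun ω => αc + Γ₀.mulVec (z ω) ⬝ᵥ βv +
          Γ₀.mulVec (z ω) ⬝ᵥ Om.mulVec (Γ₀.mulVec (z ω)))
    -- condition (C1) or condition (C2)
    (hC : Δ = 3 ∨ ∀ k, (Γ₀ᵀ * Om * Γ₀) k k = 0) :
    αc = (∫ ω, Y ω ∂μ) -
        (Sig⁻¹ * Matrix.of fun k l =>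
          ∫ ω, (Y ω - ∫ ω', Y ω' ∂μ) * Γ₀.mulVec (z ω) k * Γ₀.mulVec (z ω) l ∂μ).trace / 2 ∧
      (∫ ω, Y ω ∂μ) = αc + (Om * Sig).trace := by
  classical
  set M : Matrix (Fin q) (Fin q) ℝ := Γ₀ᵀ * Om * Γ₀ with hMdef
  set P : Matrix (Fin q) (Fin q) ℝ := Γ₀ᵀ * Sig⁻¹ * Γ₀ with hPdef
  set c : Fin q → ℝ := Γ₀ᵀ.mulVec βv with hcdef
  set EY : ℝ := ∫ ω, Y ω ∂μ with hEYdef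
  -- integrability of monomials
  have int4 : ∀ a b i j : Fin q, Integrable (fun ω => z ω a * z ω b * z ω i * z ω j) μ := by
    intro a b i j
    have hg : Integrable (fun ω => ((z ω a)^4 + (z ω b)^4 + (z ω i)^4 + (z ω j)^4)/4) μ := by
      apply Integrable.div_const
      exact (((hint4 a).add (hint4 b)).add (hint4 i)).add (hint4 j)
    refine Integrable.mono' hg
      ((((hz_meas a).mul (hz_meas b)).mul ((hz_meas i)) |>.mul
        (hz_meas j)).aestronglyMeasurable) ?_
    filter_upwards with ω
    rw [Real.norm_eq_abs]
    have := abs_mul4_le (z ω a) (z ω b) (z ω i) (z ω j)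
    linarith
  have int3 : ∀ a b i : Fin q, Integrable (fun ω => z ω a * z ω b * z ω i) μ := by
    intro a b i
    have hg : Integrable (fun ω => ((z ω a)^4 + (z ω b)^4 + (z ω i)^4 + 1)/4) μ := by
      apply Integrable.div_const
      exact (((hint4 a).add (hint4 b)).add (hint4 i)).add (integrable_const 1)
    refine Integrable.mono' hg
      (((hz_meas a).mul (hz_meas b) |>.mul (hz_meas i)).aestronglyMeasurable) ?_
    filter_upwards with ω
    rw [Real.norm_eq_abs]
    have h := abs_mul4_le (z ω a) (z ω b) (z ω i) 1
    rw [mul_one] at h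
    norm_num at h ⊢
    linarith
  have int2 : ∀ a b : Fin q, Integrable (fun ω => z ω a * z ω b) μ := by
    intro a b
    have hg : Integrable (fun ω => ((z ω a)^4 + (z ω b)^4 + 1 + 1)/4) μ := by
      apply Integrable.div_const
      exact (((hint4 a).add (hint4 b)).add (integrable_const 1)).add (integrable_const 1)
    refine Integrable.mono' hg
      (((hz_meas a).mul (hz_meas b)).aestronglyMeasurable) ?_
    filter_upwards with ω
    rw [Real.norm_eq_abs]
    have h := abs_mul4_le (z ω a) (z ω b) 1 1
    rw [mul_one, mul_one] at h
    norm_num at h ⊢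
    linarith
  have int1 : ∀ a : Fin q, Integrable (fun ω => z ω a) μ := by
    intro a
    have hg : Integrable (fun ω => ((z ω a)^4 + 1 + 1 + 1)/4) μ := by
      apply Integrable.div_const
      exact (((hint4 a).add (integrable_const 1)).add (integrable_const 1)).add
        (integrable_const 1)
    refine Integrable.mono' hg ((hz_meas a).aestronglyMeasurable) ?_
    filter_upwards with ω
    rw [Real.norm_eq_abs]
    have h := abs_mul4_le (z ω a) 1 1 1
    rw [mul_one, mul_one, mul_one] at h
    norm_num at h ⊢
    linarith
  have intY : Integrable Y μ := hY2.integrable one_le_two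
  have intY2 : Integrable (fun ω => Y ω ^ 2) μ := hY2.integrable_sq
  have intYzz : ∀ a b : Fin q, Integrable (fun ω => Y ω * (z ω a * z ω b)) μ := by
    intro a b
    have hzz2 : Integrable (fun ω => (z ω a * z ω b)^2) μ := by
      have he : (fun ω => (z ω a * z ω b)^2)
          = fun ω => z ω a * z ω a * z ω b * z ω b := funext fun ω => by ring
      rw [he]; exact int4 a a b b
    have hg : Integrable (fun ω => (Y ω ^ 2 + (z ω a * z ω b)^2)/2) μ := by
      apply Integrable.div_const
      exact intY2.add hzz2
    refine Integrable.mono' hg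
      ((hY_meas.mul ((hz_meas a).mul (hz_meas b))).aestronglyMeasurable) ?_
    filter_upwards with ω
    rw [Real.norm_eq_abs]
    rcases abs_cases (Y ω * (z ω a * z ω b)) with ⟨h, _⟩ | ⟨h, _⟩ <;> rw [h] <;>
      nlinarith [sq_nonneg (Y ω - z ω a * z ω b), sq_nonneg (Y ω + z ω a * z ω b)]
  have intYzz' : ∀ a b : Fin q, Integrable (fun ω => (Y ω - EY) * (z ω a * z ω b)) μ := by
    intro a b
    have h := (intYzz a b).sub ((int2 a b).const_mul EY)
    refine h.congr ?_
    filter_upwards with ω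
    simp only [Pi.sub_apply]
    ring
  -- basic integrals of monomials
  have hizz : ∀ a b, ∫ ω, z ω a * z ω b ∂μ = if a = b then 1 else 0 :=
    zmom2 hz_meas hz_indep hm1 hm2
  have hizzz : ∀ a b i, ∫ ω, z ω a * z ω b * z ω i ∂μ = 0 :=
    zmom3 hz_meas hz_indep hm1 hm3
  have hwick : ∀ a b i j, ∫ ω, z ω a * z ω b * z ω i * z ω j ∂μ =
      (if a = b then (1:ℝ) else 0) * (if i = j then 1 else 0)
      + (if a = i then (1:ℝ) else 0) * (if b = j then 1 else 0)
      + (if a = j then (1:ℝ) else 0) * (if b = i then 1 else 0)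
      + (if a = b ∧ b = i ∧ i = j then Δ - 3 else 0) :=
    zmom4 hz_meas hz_indep hm1 hm2 hm3 hm4
  -- integral of a quadratic form
  have hiQ : ∀ C : Matrix (Fin q) (Fin q) ℝ,
      ∫ ω, ∑ a, ∑ b, C a b * (z ω a * z ω b) ∂μ = C.trace := by
    intro C
    rw [integral_finset_sum _ (f := fun a ω => ∑ b, C a b * (z ω a * z ω b)) fun a _ =>
      integrable_finset_sum _ fun b _ => (int2 a b).const_mul _]
    have h1 : ∀ a : Fin q, ∫ ω, ∑ b, C a b * (z ω a * z ω b) ∂μ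
        = ∑ b, C a b * (if a = b then (1:ℝ) else 0) := by
      intro a
      rw [integral_finset_sum _ fun b _ => (int2 a b).const_mul _]
      exact Finset.sum_congr rfl fun b _ => by rw [integral_const_mul, hizz]
    rw [Finset.sum_congr rfl fun a _ => h1 a]
    simp [mul_ite, Finset.sum_ite_eq, Matrix.trace, Matrix.diag]
  have hiL : ∫ ω, ∑ i, c i * z ω i ∂μ = 0 := by
    rw [integral_finset_sum _ fun i _ => (int1 i).const_mul _]
    simp only [integral_const_mul]
    simp [hm1]
  -- measurability of x and the sigma-algebra
  have hzm : Measurable z := measurable_pi_lambda _ hz_meas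
  have hx_meas : Measurable (fun ω => Γ₀.mulVec (z ω) + u) := by
    have hcont : Continuous (fun v : Fin q → ℝ => Γ₀.mulVec v + u) :=
      ((continuous_const (y := Γ₀)).matrix_mulVec continuous_id).add continuous_const
    exact hcont.measurable.comp hzm
  -- pointwise expansions
  have hQeq : ∀ ω, Γ₀.mulVec (z ω) ⬝ᵥ Om.mulVec (Γ₀.mulVec (z ω))
      = ∑ i, ∑ j, M i j * (z ω i * z ω j) := fun ω => quadform_expand Γ₀ Om (z ω)
  have hLeq : ∀ ω, Γ₀.mulVec (z ω) ⬝ᵥ βv = ∑ i, c i * z ω i := fun ω =>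
    lin_expand Γ₀ βv (z ω)
  -- integrability of the model terms
  have hintL : Integrable (fun ω => ∑ i, c i * z ω i) μ :=
    integrable_finset_sum _ fun i _ => (int1 i).const_mul _
  have hintsum2 : ∀ C : Matrix (Fin q) (Fin q) ℝ,
      Integrable (fun ω => ∑ a, ∑ b, C a b * (z ω a * z ω b)) μ := fun C =>
    integrable_finset_sum _ fun a _ =>
      integrable_finset_sum _ fun b _ => (int2 a b).const_mul _
  -- now the sigma-algebra
  set m : MeasurableSpace Ω :=
    MeasurableSpace.comap (fun ω => Γ₀.mulVec (z ω) + u) inferInstance with hmdef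
  have hm : m ≤ _ := hx_meas.comap_le
  -- W = (x-u)ᵀ Σ⁻¹ (x-u)
  set W : Ω → ℝ := fun ω => Γ₀.mulVec (z ω) ⬝ᵥ Sig⁻¹.mulVec (Γ₀.mulVec (z ω)) with hWdef
  have hW_sm : StronglyMeasurable[m] W := by
    have hg : Continuous (fun v : Fin p → ℝ => (v - u) ⬝ᵥ Sig⁻¹.mulVec (v - u)) :=
      (continuous_id.sub continuous_const).dotProduct
        ((continuous_const (y := Sig⁻¹)).matrix_mulVec (continuous_id.sub continuous_const))
    have hxm : Measurable[m] (fun ω => Γ₀.mulVec (z ω) + u) :=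
      Measurable.of_comap_le le_rfl
    have hco : W = (fun v : Fin p → ℝ => (v - u) ⬝ᵥ Sig⁻¹.mulVec (v - u)) ∘
        (fun ω => Γ₀.mulVec (z ω) + u) := by
      funext ω
      simp [hWdef, Function.comp, add_sub_cancel_right]
    rw [hco]
    exact (hg.measurable.comp hxm).stronglyMeasurable
  have hWeq : ∀ ω, W ω = ∑ a, ∑ b, P a b * (z ω a * z ω b) := fun ω =>
    quadform_expand Γ₀ Sig⁻¹ (z ω)
  have hWint : Integrable W μ := by
    rw [show W = fun ω => ∑ a, ∑ b, P a b * (z ω a * z ω b) from funext hWeq]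
    exact hintsum2 P
  -- E Y = αc + tr(Om Sig)
  have htraceM : M.trace = (Om * Sig).trace := by
    rw [hMdef, Matrix.trace_mul_cycle, hSig, Matrix.trace_mul_comm]
  have hEY : EY = αc + (Om * Sig).trace := by
    have hstep : ∫ ω, (μ[Y|m]) ω ∂μ
        = ∫ ω, (αc + (∑ i, c i * z ω i) + ∑ i, ∑ j, M i j * (z ω i * z ω j)) ∂μ :=
      integral_congr_ae (hmodel.mono fun ω hω => by
        dsimp only; rw [hω]; dsimp only; rw [hLeq ω, hQeq ω])
    have i1 : Integrable (fun ω => αc + ∑ i, c i * z ω i) μ :=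
      (integrable_const αc).add hintL
    rw [hEYdef, ← integral_condExp hm (f := Y), hstep]
    rw [integral_add i1 (hintsum2 M), integral_add (integrable_const _) hintL,
      integral_const, hiL, hiQ M]
    simp [htraceM]
  refine ⟨?_, hEY⟩
  -- integrability of W * Y
  have hWY_int : Integrable (fun ω => W ω * Y ω) μ := by
    have he : (fun ω => W ω * Y ω)
        = fun ω => ∑ a, ∑ b, P a b * (Y ω * (z ω a * z ω b)) := by
      funext ω
      rw [hWeq ω, Finset.sum_mul]
      exact Finset.sum_congr rfl fun a _ => by
        rw [Finset.sum_mul]; exact Finset.sum_congr rfl fun b _ => by ring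
    rw [he]
    exact integrable_finset_sum _ fun a _ =>
      integrable_finset_sum _ fun b _ => (intYzz a b).const_mul _
  -- conditional expectation pull-out
  have hpull : μ[fun ω => W ω * Y ω | m] =ᵐ[μ] fun ω => W ω * (μ[Y | m]) ω := by
    exact condExp_mul_of_stronglyMeasurable_left hW_sm hWY_int intY
  -- ∫ W Y via the model
  have hiWY : ∫ ω, W ω * Y ω ∂μ
      = ∫ ω, W ω * (αc + (∑ i, c i * z ω i) + ∑ i, ∑ j, M i j * (z ω i * z ω j)) ∂μ := by
    rw [← integral_condExp hm (f := fun ω => W ω * Y ω), integral_congr_ae hpull]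
    exact integral_congr_ae (hmodel.mono fun ω hω => by
      dsimp only; rw [hω]; dsimp only; rw [hLeq ω, hQeq ω])
  -- expansions of W * L and W * Q
  have hexpWL : (fun ω => W ω * (∑ i, c i * z ω i))
      = fun ω => ∑ a, ∑ b, ∑ i, (P a b * c i) * (z ω a * z ω b * z ω i) := by
    funext ω
    rw [hWeq ω, Finset.sum_mul]
    refine Finset.sum_congr rfl fun a _ => ?_
    rw [Finset.sum_mul]
    refine Finset.sum_congr rfl fun b _ => ?_
    rw [Finset.mul_sum]
    exact Finset.sum_congr rfl fun i _ => by ring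
  have intWL : Integrable (fun ω => W ω * (∑ i, c i * z ω i)) μ := by
    rw [hexpWL]
    exact integrable_finset_sum _ fun a _ => integrable_finset_sum _ fun b _ =>
      integrable_finset_sum _ fun i _ => (int3 a b i).const_mul _
  have hiWL : ∫ ω, W ω * (∑ i, c i * z ω i) ∂μ = 0 := by
    rw [hexpWL, integral_finset_sum _ fun a _ => integrable_finset_sum _ fun b _ =>
      integrable_finset_sum _ fun i _ => (int3 a b i).const_mul _]
    refine Finset.sum_eq_zero fun a _ => ?_
    rw [integral_finset_sum _ fun b _ => integrable_finset_sum _ fun i _ =>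
      (int3 a b i).const_mul _]
    refine Finset.sum_eq_zero fun b _ => ?_
    rw [integral_finset_sum _ fun i _ => (int3 a b i).const_mul _]
    refine Finset.sum_eq_zero fun i _ => ?_
    rw [integral_const_mul, hizzz, mul_zero]
  have hexpWQ : (fun ω => W ω * (∑ i, ∑ j, M i j * (z ω i * z ω j)))
      = fun ω => ∑ a, ∑ b, ∑ i, ∑ j,
          (P a b * M i j) * (z ω a * z ω b * z ω i * z ω j) := by
    funext ω
    rw [hWeq ω, Finset.sum_mul]
    refine Finset.sum_congr rfl fun a _ => ?_
    rw [Finset.sum_mul]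
    refine Finset.sum_congr rfl fun b _ => ?_
    rw [Finset.mul_sum]
    refine Finset.sum_congr rfl fun i _ => ?_
    rw [Finset.mul_sum]
    exact Finset.sum_congr rfl fun j _ => by ring
  have intWQ : Integrable (fun ω => W ω * (∑ i, ∑ j, M i j * (z ω i * z ω j))) μ := by
    rw [hexpWQ]
    exact integrable_finset_sum _ fun a _ => integrable_finset_sum _ fun b _ =>
      integrable_finset_sum _ fun i _ => integrable_finset_sum _ fun j _ =>
        (int4 a b i j).const_mul _
  have hiWQ : ∫ ω, W ω * (∑ i, ∑ j, M i j * (z ω i * z ω j)) ∂μ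
      = P.trace * M.trace + (M * Pᵀ).trace + (M * P).trace
        + (Δ - 3) * ∑ a, P a a * M a a := by
    rw [hexpWQ, integral_finset_sum _ fun a _ => integrable_finset_sum _ fun b _ =>
      integrable_finset_sum _ fun i _ => integrable_finset_sum _ fun j _ =>
        (int4 a b i j).const_mul _]
    have step : ∀ a : Fin q, ∫ ω, ∑ b, ∑ i, ∑ j,
        (P a b * M i j) * (z ω a * z ω b * z ω i * z ω j) ∂μ
        = ∑ b, ∑ i, ∑ j, P a b * M i j *
          ((if a = b then (1:ℝ) else 0) * (if i = j then 1 else 0)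
          + (if a = i then (1:ℝ) else 0) * (if b = j then 1 else 0)
          + (if a = j then (1:ℝ) else 0) * (if b = i then 1 else 0)
          + (if a = b ∧ b = i ∧ i = j then Δ - 3 else 0)) := by
      intro a
      rw [integral_finset_sum _ fun b _ => integrable_finset_sum _ fun i _ =>
        integrable_finset_sum _ fun j _ => (int4 a b i j).const_mul _]
      refine Finset.sum_congr rfl fun b _ => ?_
      rw [integral_finset_sum _ fun i _ => integrable_finset_sum _ fun j _ =>
        (int4 a b i j).const_mul _]
      refine Finset.sum_congr rfl fun i _ => ?_
      rw [integral_finset_sum _ fun j _ => (int4 a b i j).const_mul _]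
      refine Finset.sum_congr rfl fun j _ => ?_
      rw [integral_const_mul, hwick a b i j]
    rw [Finset.sum_congr rfl fun a _ => step a]
    have expand : ∑ a, ∑ b, ∑ i, ∑ j, P a b * M i j *
          ((if a = b then (1:ℝ) else 0) * (if i = j then 1 else 0)
          + (if a = i then (1:ℝ) else 0) * (if b = j then 1 else 0)
          + (if a = j then (1:ℝ) else 0) * (if b = i then 1 else 0)
          + (if a = b ∧ b = i ∧ i = j then Δ - 3 else 0))
        = (∑ a, ∑ b, ∑ i, ∑ j, P a b * M i j *
            ((if a = b then (1:ℝ) else 0) * (if i = j then 1 else 0)))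
          + (∑ a, ∑ b, ∑ i, ∑ j, P a b * M i j *
            ((if a = i then (1:ℝ) else 0) * (if b = j then 1 else 0)))
          + (∑ a, ∑ b, ∑ i, ∑ j, P a b * M i j *
            ((if a = j then (1:ℝ) else 0) * (if b = i then 1 else 0)))
          + (∑ a, ∑ b, ∑ i, ∑ j, P a b * M i j *
            (if a = b ∧ b = i ∧ i = j then Δ - 3 else 0)) := by
      simp only [mul_add, Finset.sum_add_distrib]
    rw [expand, contract1, contract2, contract3, contract4]
  -- matrix identities
  have hSinv : Sig * Sig⁻¹ = 1 :=
    Matrix.mul_nonsing_inv _ ((Matrix.isUnit_iff_isUnit_det _).1 hSigPD.isUnit)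
  have hSt : Sigᵀ = Sig := by
    rw [← hSig, Matrix.transpose_mul, Matrix.transpose_transpose]
  have hPt : Pᵀ = P := by
    rw [hPdef, Matrix.transpose_mul, Matrix.transpose_mul, Matrix.transpose_transpose,
      Matrix.transpose_nonsing_inv, hSt, ← Matrix.mul_assoc]
  have hMP : M * P = M := by
    rw [hMdef, hPdef, Matrix.mul_assoc Γ₀ᵀ Sig⁻¹ Γ₀]
    have key : Γ₀ * (Γ₀ᵀ * (Sig⁻¹ * Γ₀)) = Γ₀ := by
      rw [← Matrix.mul_assoc, ← Matrix.mul_assoc, hSig]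
      rw [Matrix.mul_assoc, ← Matrix.mul_assoc, hSinv, Matrix.one_mul]
    calc Γ₀ᵀ * Om * Γ₀ * (Γ₀ᵀ * (Sig⁻¹ * Γ₀))
        = Γ₀ᵀ * Om * (Γ₀ * (Γ₀ᵀ * (Sig⁻¹ * Γ₀))) := by
          rw [Matrix.mul_assoc (Γ₀ᵀ * Om) Γ₀ _]
      _ = Γ₀ᵀ * Om * Γ₀ := by rw [key]
  have hdiag : (Δ - 3) * ∑ a, P a a * M a a = 0 := by
    rcases hC with h | h
    · rw [h]; norm_num
    · have hz : ∑ a, P a a * M a a = 0 :=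
        Finset.sum_eq_zero fun a _ => by rw [h a, mul_zero]
      rw [hz, mul_zero]
  -- trace(Σ⁻¹ Λ_y) = ∫ (Y - EY) W
  have intYGz : ∀ k l : Fin p,
      Integrable (fun ω => (Y ω - EY) * Γ₀.mulVec (z ω) k * Γ₀.mulVec (z ω) l) μ := by
    intro k l
    have he : (fun ω => (Y ω - EY) * Γ₀.mulVec (z ω) k * Γ₀.mulVec (z ω) l)
        = fun ω => ∑ i, ∑ j, (Γ₀ k i * Γ₀ l j) * ((Y ω - EY) * (z ω i * z ω j)) :=
      funext fun ω => triple_expand Γ₀ (z ω) (Y ω - EY) k l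
    rw [he]
    exact integrable_finset_sum _ fun i _ =>
      integrable_finset_sum _ fun j _ => (intYzz' i j).const_mul _
  have hTW : (Sig⁻¹ * Matrix.of fun k l =>
        ∫ ω, (Y ω - EY) * Γ₀.mulVec (z ω) k * Γ₀.mulVec (z ω) l ∂μ).trace
      = ∫ ω, (Y ω - EY) * W ω ∂μ := by
    have h1 : (Sig⁻¹ * Matrix.of fun k l =>
          ∫ ω, (Y ω - EY) * Γ₀.mulVec (z ω) k * Γ₀.mulVec (z ω) l ∂μ).trace
        = ∑ k, ∑ l, Sig⁻¹ k l *
            ∫ ω, (Y ω - EY) * Γ₀.mulVec (z ω) l * Γ₀.mulVec (z ω) k ∂μ := by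
      simp [Matrix.trace, Matrix.diag, Matrix.mul_apply, Matrix.of_apply]
    rw [h1]
    have h2 : ∀ k l : Fin p, Sig⁻¹ k l *
          ∫ ω, (Y ω - EY) * Γ₀.mulVec (z ω) l * Γ₀.mulVec (z ω) k ∂μ
        = ∫ ω, Sig⁻¹ k l * ((Y ω - EY) * Γ₀.mulVec (z ω) l * Γ₀.mulVec (z ω) k) ∂μ :=
      fun k l => (integral_const_mul _ _).symm
    rw [Finset.sum_congr rfl fun k _ => Finset.sum_congr rfl fun l _ => h2 k l]
    rw [Finset.sum_congr rfl fun k _ => (integral_finset_sum _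
      (f := fun l ω => Sig⁻¹ k l * ((Y ω - EY) * Γ₀.mulVec (z ω) l * Γ₀.mulVec (z ω) k))
      fun l _ => ((intYGz l k).const_mul _)).symm]
    rw [(integral_finset_sum _
      (f := fun k ω => ∑ l, Sig⁻¹ k l * ((Y ω - EY) * Γ₀.mulVec (z ω) l * Γ₀.mulVec (z ω) k))
      fun k _ => integrable_finset_sum _ fun l _ =>
      ((intYGz l k).const_mul _)).symm]
    refine integral_congr_ae (Filter.Eventually.of_forall fun ω => ?_)
    exact collect_quad Sig⁻¹ (Γ₀.mulVec (z ω)) (Y ω - EY)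
  -- compute ∫ (Y - EY) W
  have hiW : ∫ ω, W ω ∂μ = P.trace := by
    rw [show W = fun ω => ∑ a, ∑ b, P a b * (z ω a * z ω b) from funext hWeq]
    exact hiQ P
  have hsplitYW : ∫ ω, (Y ω - EY) * W ω ∂μ = ∫ ω, W ω * Y ω ∂μ - EY * P.trace := by
    have he : (fun ω => (Y ω - EY) * W ω) = fun ω => W ω * Y ω - EY * W ω :=
      funext fun ω => by ring
    rw [he, integral_sub hWY_int (hWint.const_mul EY), integral_const_mul, hiW]
  have hiWrhs : ∫ ω, W ω * (αc + (∑ i, c i * z ω i)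
        + ∑ i, ∑ j, M i j * (z ω i * z ω j)) ∂μ
      = αc * P.trace + (P.trace * M.trace + (M * Pᵀ).trace + (M * P).trace
        + (Δ - 3) * ∑ a, P a a * M a a) := by
    have he : (fun ω => W ω * (αc + (∑ i, c i * z ω i)
          + ∑ i, ∑ j, M i j * (z ω i * z ω j)))
        = fun ω => αc * W ω + (W ω * (∑ i, c i * z ω i)
          + W ω * (∑ i, ∑ j, M i j * (z ω i * z ω j))) := funext fun ω => by ring
    have i2 : Integrable (fun ω => W ω * (∑ i, c i * z ω i)
        + W ω * (∑ i, ∑ j, M i j * (z ω i * z ω j))) μ := intWL.add intWQ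
    rw [he, integral_add (hWint.const_mul αc) i2,
      integral_add intWL intWQ, integral_const_mul, hiW, hiWL, hiWQ]
    ring
  -- final assembly
  have hTval : (Sig⁻¹ * Matrix.of fun k l =>
        ∫ ω, (Y ω - EY) * Γ₀.mulVec (z ω) k * Γ₀.mulVec (z ω) l ∂μ).trace
      = 2 * (Om * Sig).trace := by
    rw [hTW, hsplitYW, hiWY, hiWrhs, hdiag, hPt, hMP, htraceM, hEY]
    ring
  rw [hTval]
  linarith [hEY]
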